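/- Suppose dom J = H_har ⊕ ker J, 0 is not an eigenvalue of the Dirichlet operator L_D (the self-adjoint operator associated to E restricted to ker J), and λ ∈ ℝ is not an eigenvalue of L_D. Then dom J = H_har(λ) ⊕ ker J, where H_har(λ) = {u ∈ dom J : E(u,v) = λ(u,v) for all v ∈ ker J}. Explicitly, u = (u − u_λ) + u_λ with u_λ = Pu + λ(L_D − λ)⁻¹Pu ∈ H_har(λ) and u − u_λ ∈ ker J. -/

import Mathlib

open RealInnerProductSpace

/-- If `dom J = H_har ⊕ ker J`, `0` is not an eigenvalue of the Dirichlet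
operator `L_D` and `λ` is not an eigenvalue of `L_D` (eigenvalues encoded
weakly via the form `E` on `ker J`), then `dom J = H_har(λ) ⊕ ker J`.
Explicitly, with `R = (L_D - λ)⁻¹` (encoded by its weak formulation),
`u = (u - u_λ) + u_λ` where `u_λ = Pu + λ R(Pu) ∈ H_har(λ)` and
`u - u_λ ∈ ker J`, and the `H_har(λ)`-component is unique. -/
theorem stmt_7 {H Haux : Type*}
    [NormedAddCommGroup H] [InnerProductSpace ℝ H]
    [NormedAddCommGroup Haux] [InnerProductSpace ℝ Haux]
    (D : Submodule ℝ H)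
    (E : H →ₗ[ℝ] H →ₗ[ℝ] ℝ)
    (hsymm : ∀ x y : H, E x y = E y x)
    (hpos : ∀ v : D, 0 ≤ E (v : H) (v : H))
    (J : D →ₗ[ℝ] Haux)
    (lam : ℝ)
    -- direct sum dom J = H_har ⊕ ker J, with projection P onto H_har
    (P : D → D)
    (hP : ∀ u : D, (∀ w : D, J w = 0 → E ((P u : D) : H) (w : H) = 0) ∧ J (u - P u) = 0)
    (huniq : ∀ u p : D, (∀ w : D, J w = 0 → E (p : H) (w : H) = 0) → J (u - p) = 0 →
      p = P u)
    -- 0 is not an eigenvalue of L_D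
    (h0 : ¬ ∃ v : D, v ≠ 0 ∧ J v = 0 ∧ ∀ w : D, J w = 0 → E (v : H) (w : H) = 0)
    -- λ is not an eigenvalue of L_D
    (hlam : ¬ ∃ v : D, v ≠ 0 ∧ J v = 0 ∧
      ∀ w : D, J w = 0 → E (v : H) (w : H) = lam * (inner ℝ (v : H) (w : H) : ℝ))
    -- R = (L_D - λ)⁻¹ in weak form: R f ∈ ker J and E(Rf,w) - λ(Rf,w) = (f,w) ∀ w ∈ ker J
    (R : D → D)
    (hRker : ∀ f : D, J (R f) = 0)
    (hR : ∀ f w : D, J w = 0 →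
      E ((R f : D) : H) (w : H) - lam * (inner ℝ ((R f : D) : H) (w : H) : ℝ) = (inner ℝ (f : H) (w : H) : ℝ)) :
    ∀ u : D,
      J (u - (P u + lam • R (P u))) = 0
      ∧ (∀ w : D, J w = 0 →
          E ((P u + lam • R (P u) : D) : H) (w : H)
            = lam * (inner ℝ ((P u + lam • R (P u) : D) : H) (w : H) : ℝ))
      ∧ (∀ a : D,
          (∀ w : D, J w = 0 → E (a : H) (w : H) = lam * (inner ℝ (a : H) (w : H) : ℝ)) →
          J (u - a) = 0 → a = P u + lam • R (P u)) := by
  intro u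
  have hker : J (u - (P u + lam • R (P u))) = 0 := by
    have h1 := (hP u).2
    have h2 := hRker (P u)
    have : u - (P u + lam • R (P u)) = (u - P u) - lam • R (P u) := by abel
    rw [this, map_sub, map_smul, h1, h2, smul_zero, sub_zero]
  have hhar : ∀ w : D, J w = 0 →
      E ((P u + lam • R (P u) : D) : H) (w : H)
        = lam * (inner ℝ ((P u + lam • R (P u) : D) : H) (w : H) : ℝ) := by
    intro w hw
    have h1 := (hP u).1 w hw
    have h2 := hR (P u) w hw
    have hc : ((P u + lam • R (P u) : D) : H) = (P u : H) + lam • (R (P u) : H) := rfl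
    rw [hc, map_add, map_smul, LinearMap.add_apply, LinearMap.smul_apply, h1,
      inner_add_left, real_inner_smul_left]
    simp only [smul_eq_mul]
    linear_combination lam * h2
  refine ⟨hker, hhar, ?_⟩
  intro a ha hua
  by_contra hne
  apply hlam
  refine ⟨a - (P u + lam • R (P u)), sub_ne_zero.mpr hne, ?_, ?_⟩
  · have : a - (P u + lam • R (P u)) = (u - (P u + lam • R (P u))) - (u - a) := by abel
    rw [this, map_sub, hker, hua, sub_zero]
  · intro w hw
    have h1 := ha w hw
    have h2 := hhar w hw
    have hc : ((a - (P u + lam • R (P u)) : D) : H)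
        = (a : H) - ((P u + lam • R (P u) : D) : H) := rfl
    rw [hc, map_sub, LinearMap.sub_apply, h1, h2, inner_sub_left]
    ring
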